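/- (Telescoping partition-function identity, Lemma 2 of Ziebart et al. used throughout the paper.) For every machine policy Q, every λ = (λ_f, λ_g) ∈ ℝ^𝓕 × ℝ^𝓖, and every human model P′, the causal cross-entropy of the causal Gibbs model P_λ satisfies E_{P′Q}[−log P_λ(H^T‖M^T)] = Σ_{m_1∈𝓜} Q(m_1)·log Z_λ(m_1) − λ_f·E_{P′Q}[f(H^T,M^T)] − λ_g·E_{P′Q}[g(H^T,M^T)], where P_λ(h^T‖m^T) := ∏_{t=1}^T P_λ(h_t | h^{t-1}, m^t). -/

import Mathlib

/-! Common framework: finite-horizon human–machine interaction processes.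
Times are 0-indexed: step `t : Fin T` corresponds to the paper's step `t+1`.
A human model gives conditional PMFs `P(h_t | h^{t-1}, m^t)`: the value
`p t h m a` may depend only on `h s` for `s < t`, on `m s` for `s ≤ t`, and on `a`.
A machine policy gives conditional PMFs `Q(m_t | h^{t-1}, m^{t-1})`: the value
`q t h m b` may depend only on `h s`, `m s` for `s < t`, and on `b`. -/

structure HumanModel (T : ℕ) (H M : Type*) [Fintype H] where
  p : Fin T → (Fin T → H) → (Fin T → M) → H → ℝ
  causal : ∀ (t : Fin T) (h h' : Fin T → H) (m m' : Fin T → M),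
      (∀ s, s < t → h s = h' s) → (∀ s, s ≤ t → m s = m' s) → p t h m = p t h' m'
  nonneg : ∀ t h m a, 0 ≤ p t h m a
  sum_one : ∀ t h m, ∑ a, p t h m a = 1

structure MachinePolicy (T : ℕ) (H M : Type*) [Fintype M] where
  q : Fin T → (Fin T → H) → (Fin T → M) → M → ℝ
  causal : ∀ (t : Fin T) (h h' : Fin T → H) (m m' : Fin T → M),
      (∀ s, s < t → h s = h' s) → (∀ s, s < t → m s = m' s) → q t h m = q t h' m'
  nonneg : ∀ t h m b, 0 ≤ q t h m b
  sum_one : ∀ t h m, ∑ b, q t h m b = 1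

variable {T : ℕ} {H M : Type*} [Fintype H] [Fintype M]

/-- Causally conditioned distribution of the human: `P(h^T ‖ m^T)`. -/
noncomputable def HumanModel.cc (P : HumanModel T H M) (h : Fin T → H) (m : Fin T → M) : ℝ :=
  ∏ t, P.p t h m (h t)

/-- Causally conditioned distribution of the machine: `Q(m^T ‖ h^T)`. -/
noncomputable def MachinePolicy.cc (Q : MachinePolicy T H M) (h : Fin T → H) (m : Fin T → M) : ℝ :=
  ∏ t, Q.q t h m (m t)

/-- Joint PMF `PQ(h^T, m^T)`. -/
noncomputable def jointPMF (P : HumanModel T H M) (Q : MachinePolicy T H M)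
    (h : Fin T → H) (m : Fin T → M) : ℝ :=
  P.cc h m * Q.cc h m

/-- Expectation `E_{PQ}[φ(H^T, M^T)]`. -/
noncomputable def expVal (P : HumanModel T H M) (Q : MachinePolicy T H M)
    (φ : (Fin T → H) → (Fin T → M) → ℝ) : ℝ :=
  ∑ h : Fin T → H, ∑ m : Fin T → M, jointPMF P Q h m * φ h m

/-- Causally conditioned entropy of the human, `H_{PQ}(H^T ‖ M^T)`. -/
noncomputable def humanEntropy (P : HumanModel T H M) (Q : MachinePolicy T H M) : ℝ :=
  ∑ h : Fin T → H, ∑ m : Fin T → M, jointPMF P Q h m * (- Real.log (P.cc h m))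

/-- Causally conditioned entropy of the machine, `H_{PQ}(M^T ‖ H^T)`. -/
noncomputable def machineEntropy (P : HumanModel T H M) (Q : MachinePolicy T H M) : ℝ :=
  ∑ h : Fin T → H, ∑ m : Fin T → M, jointPMF P Q h m * (- Real.log (Q.cc h m))

lemma idx_lt (T k : ℕ) [NeZero T] : T - 1 - k < T := by
  have := Nat.pos_of_ne_zero (NeZero.ne T); omega

variable [NeZero T]

/-- Backward recursion for `Z_λ(h_t | h^{t-1}, m^t)`, parameterized by fuel `k = (T-1) - t`.
`Zaux Q φ k h m` is `Z_λ(h_t | h^{t-1}, m^t)` at (0-indexed) step `t = T - 1 - k`, where the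
current human action `h_t` is read off as `h t`. The terminal exponent `φ h m` plays the
role of `λ_f·f(h^T,m^T) + λ_g·g(h^T,m^T)`. -/
noncomputable def Zaux (Q : MachinePolicy T H M)
    (φ : (Fin T → H) → (Fin T → M) → ℝ) :
    ℕ → (Fin T → H) → (Fin T → M) → ℝ
  | 0, h, m => Real.exp (φ h m)
  | k + 1, h, m =>
      Real.exp (∑ b : M, Q.q ⟨T - 1 - k, idx_lt T k⟩ h m b *
        Real.log (∑ a : H, Zaux Q φ k
          (Function.update h ⟨T - 1 - k, idx_lt T k⟩ a)
          (Function.update m ⟨T - 1 - k, idx_lt T k⟩ b)))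

/-- `Z_λ(h_t | h^{t-1}, m^t)` at step `t`, with `h_t = h t`. -/
noncomputable def Zcond (Q : MachinePolicy T H M)
    (φ : (Fin T → H) → (Fin T → M) → ℝ) (t : Fin T)
    (h : Fin T → H) (m : Fin T → M) : ℝ :=
  Zaux Q φ (T - 1 - t.val) h m

/-- `Z_λ(h^{t-1}, m^t) = Σ_{h_t} Z_λ(h_t | h^{t-1}, m^t)`. -/
noncomputable def Zmarg (Q : MachinePolicy T H M)
    (φ : (Fin T → H) → (Fin T → M) → ℝ) (t : Fin T)
    (h : Fin T → H) (m : Fin T → M) : ℝ :=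
  ∑ a : H, Zcond Q φ t (Function.update h t a) m

variable [Nonempty H] [Nonempty M]

/-- `Σ_{m_1} Q(m_1) · log Z_λ(m_1)` (the log-partition part of the dual objective).
By causality of `Q` and of the recursion, the choice of base sequences is immaterial. -/
noncomputable def dualPartition (Q : MachinePolicy T H M)
    (φ : (Fin T → H) → (Fin T → M) → ℝ) : ℝ :=
  ∑ b : M, Q.q 0 (Classical.arbitrary _) (Classical.arbitrary _) b *
    Real.log (Zmarg Q φ 0 (Classical.arbitrary _)
      (Function.update (Classical.arbitrary (Fin T → M)) 0 b))

/-- `P` is the causal Gibbs human model `P_λ` associated with machine policy `Q` and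
terminal exponent `φ`: `P_λ(h_t | h^{t-1}, m^t) = Z_λ(h_t | h^{t-1}, m^t) / Z_λ(h^{t-1}, m^t)`. -/
def IsGibbs (Q : MachinePolicy T H M)
    (φ : (Fin T → H) → (Fin T → M) → ℝ) (P : HumanModel T H M) : Prop :=
  ∀ (t : Fin T) (h : Fin T → H) (m : Fin T → M) (a : H),
    P.p t h m a = Zcond Q φ t (Function.update h t a) m / Zmarg Q φ t h m

section AuxProof
set_option linter.unusedSectionVars false
set_option linter.unusedVariables false

lemma splitAt_symm_update {ι : Type*} [DecidableEq ι] {X : Type*} (i : ι)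
    (x y : X) (r : {j // j ≠ i} → X) :
    Function.update ((Equiv.funSplitAt i X).symm (x, r)) i y
      = (Equiv.funSplitAt i X).symm (y, r) := by
  funext j
  by_cases hj : j = i <;>
    simp [Equiv.funSplitAt, Equiv.piSplitAt, Function.update, hj]

lemma splitAt_symm_apply {ι : Type*} [DecidableEq ι] {X : Type*} (i : ι)
    (x : X) (r : {j // j ≠ i} → X) :
    (Equiv.funSplitAt i X).symm (x, r) i = x := by
  simp [Equiv.funSplitAt, Equiv.piSplitAt]

lemma sumcoord {ι : Type*} [Fintype ι] [DecidableEq ι] {X : Type*} [Fintype X]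
    (i : ι) (F : (ι → X) → X → ℝ) :
    (Fintype.card X : ℝ) * ∑ v : ι → X, F v (v i)
      = ∑ v : ι → X, ∑ x : X, F (Function.update v i x) x := by
  rw [← Equiv.sum_comp (Equiv.funSplitAt i X).symm (fun v => F v (v i)),
      ← Equiv.sum_comp (Equiv.funSplitAt i X).symm
        (fun v => ∑ x : X, F (Function.update v i x) x)]
  rw [Fintype.sum_prod_type, Fintype.sum_prod_type]
  simp only [splitAt_symm_update, splitAt_symm_apply]
  rw [Finset.sum_comm]
  simp [Finset.sum_const, nsmul_eq_mul]

/-- Prefix of the joint: product of the first `n` factors. -/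
noncomputable def Jpre (P' : HumanModel T H M) (Q : MachinePolicy T H M)
    (n : ℕ) (h : Fin T → H) (m : Fin T → M) : ℝ :=
  ∏ t : Fin T, if t.val < n then P'.p t h m (h t) * Q.q t h m (m t) else 1

/-- `ψ` depends only on coordinates `< n`. -/
def MeasLE (n : ℕ) (ψ : (Fin T → H) → (Fin T → M) → ℝ) : Prop :=
  ∀ h h' m m', (∀ s : Fin T, s.val < n → h s = h' s) →
    (∀ s : Fin T, s.val < n → m s = m' s) → ψ h m = ψ h' m'

set_option linter.unusedSectionVars false in
lemma MeasLE.mono {n n' : ℕ} {ψ : (Fin T → H) → (Fin T → M) → ℝ}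
    (hψ : MeasLE n ψ) (hle : n ≤ n') : MeasLE n' ψ :=
  fun h h' m m' ah am => hψ h h' m m' (fun s hs => ah s (hs.trans_le hle))
    (fun s hs => am s (hs.trans_le hle))

variable (P' : HumanModel T H M) (Q : MachinePolicy T H M)

lemma Jpre_zero (h : Fin T → H) (m : Fin T → M) : Jpre P' Q 0 h m = 1 := by
  simp [Jpre]

lemma Jpre_T (h : Fin T → H) (m : Fin T → M) : Jpre P' Q T h m = jointPMF P' Q h m := by
  unfold Jpre jointPMF HumanModel.cc MachinePolicy.cc
  rw [← Finset.prod_mul_distrib]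
  exact Finset.prod_congr rfl (fun t _ => by simp [t.isLt])

lemma Jpre_succ (n : Fin T) (h : Fin T → H) (m : Fin T → M) :
    Jpre P' Q (n.val+1) h m
      = Jpre P' Q n.val h m * (P'.p n h m (h n) * Q.q n h m (m n)) := by
  unfold Jpre
  have key : ∀ t : Fin T,
      (if t.val < n.val+1 then P'.p t h m (h t) * Q.q t h m (m t) else 1)
      = (if t.val < n.val then P'.p t h m (h t) * Q.q t h m (m t) else 1)
        * (if t = n then P'.p t h m (h t) * Q.q t h m (m t) else 1) := by
    intro t
    by_cases h1 : t = n
    · subst h1; simp [Nat.lt_irrefl]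
    · have hne : t.val ≠ n.val := fun hc => h1 (Fin.ext hc)
      rw [if_neg h1, mul_one]
      exact if_congr (by omega) rfl rfl
  rw [Finset.prod_congr rfl (fun t _ => key t), Finset.prod_mul_distrib,
      Finset.prod_ite_eq' Finset.univ n
        (fun t => P'.p t h m (h t) * Q.q t h m (m t)),
      if_pos (Finset.mem_univ n)]


lemma Jpre_update_h (n : ℕ) (i : Fin T) (hi : n ≤ i.val) (h : Fin T → H)
    (m : Fin T → M) (a : H) :
    Jpre P' Q n (Function.update h i a) m = Jpre P' Q n h m := by
  unfold Jpre
  refine Finset.prod_congr rfl (fun t _ => ?_)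
  by_cases ht : t.val < n
  · have hupd : ∀ s : Fin T, s.val < n → Function.update h i a s = h s :=
      fun s hs => Function.update_of_ne (fun hc => by subst hc; omega) _ _
    rw [if_pos ht, if_pos ht]
    have h1 : P'.p t (Function.update h i a) m = P'.p t h m :=
      P'.causal _ _ _ _ _ (fun s hs => hupd s ((Fin.lt_def.mp hs).trans ht))
        (fun s _ => rfl)
    have h2 : Q.q t (Function.update h i a) m = Q.q t h m :=
      Q.causal _ _ _ _ _ (fun s hs => hupd s ((Fin.lt_def.mp hs).trans ht))
        (fun s _ => rfl)
    rw [h1, h2, hupd t ht]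
  · rw [if_neg ht, if_neg ht]

lemma Jpre_update_m (n : ℕ) (i : Fin T) (hi : n ≤ i.val) (h : Fin T → H)
    (m : Fin T → M) (b : M) :
    Jpre P' Q n h (Function.update m i b) = Jpre P' Q n h m := by
  unfold Jpre
  refine Finset.prod_congr rfl (fun t _ => ?_)
  by_cases ht : t.val < n
  · have hupd : ∀ s : Fin T, s.val < n → Function.update m i b s = m s :=
      fun s hs => Function.update_of_ne (fun hc => by subst hc; omega) _ _
    rw [if_pos ht, if_pos ht]
    have h1 : P'.p t h (Function.update m i b) = P'.p t h m :=
      P'.causal _ _ _ _ _ (fun s _ => rfl)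
        (fun s hs => hupd s (lt_of_le_of_lt (Fin.le_def.mp hs) ht))
    have h2 : Q.q t h (Function.update m i b) = Q.q t h m :=
      Q.causal _ _ _ _ _ (fun s _ => rfl)
        (fun s hs => hupd s ((Fin.lt_def.mp hs).trans ht))
    rw [h1, h2, hupd t ht]
  · rw [if_neg ht, if_neg ht]

lemma step_h (n : Fin T) (ψ : (Fin T → H) → (Fin T → M) → ℝ)
    (hψ : ∀ h m a, ψ (Function.update h n a) m = ψ h m) :
    (Fintype.card H : ℝ) * ∑ h : Fin T → H, ∑ m : Fin T → M,
        Jpre P' Q (n.val+1) h m * ψ h m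
      = ∑ h : Fin T → H, ∑ m : Fin T → M,
          Jpre P' Q n.val h m * Q.q n h m (m n) * ψ h m := by
  rw [Finset.sum_comm, Finset.sum_comm (γ := Fin T → H)]
  rw [Finset.mul_sum]
  refine Finset.sum_congr rfl (fun m _ => ?_)
  have := sumcoord (X := H) n
    (fun h a => Jpre P' Q n.val h m * (P'.p n h m a * Q.q n h m (m n)) * ψ h m)
  calc (Fintype.card H : ℝ) * ∑ h : Fin T → H, Jpre P' Q (n.val+1) h m * ψ h m
      = (Fintype.card H : ℝ) * ∑ h : Fin T → H,
          Jpre P' Q n.val h m * (P'.p n h m (h n) * Q.q n h m (m n)) * ψ h m := by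
        congr 1
        exact Finset.sum_congr rfl (fun h _ => by rw [Jpre_succ])
    _ = ∑ h : Fin T → H, ∑ a : H,
          Jpre P' Q n.val (Function.update h n a) m
            * (P'.p n (Function.update h n a) m a
                * Q.q n (Function.update h n a) m (m n))
            * ψ (Function.update h n a) m := this
    _ = ∑ h : Fin T → H, ∑ a : H,
          P'.p n h m a * (Jpre P' Q n.val h m * Q.q n h m (m n) * ψ h m) := by
        refine Finset.sum_congr rfl (fun h _ => Finset.sum_congr rfl (fun a _ => ?_))
        have hup : ∀ s : Fin T, s < n → Function.update h n a s = h s :=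
          fun s hs => Function.update_of_ne (Fin.ne_of_lt hs) _ _
        rw [Jpre_update_h P' Q n.val n (le_refl _),
            P'.causal n (Function.update h n a) h m m hup (fun s _ => rfl),
            Q.causal n (Function.update h n a) h m m hup (fun s _ => rfl),
            hψ]
        ring
    _ = ∑ h : Fin T → H, Jpre P' Q n.val h m * Q.q n h m (m n) * ψ h m := by
        refine Finset.sum_congr rfl (fun h _ => ?_)
        rw [← Finset.sum_mul, P'.sum_one, one_mul]

lemma step_m (n : Fin T) (ψ : (Fin T → H) → (Fin T → M) → ℝ) :
    (Fintype.card M : ℝ) * ∑ h : Fin T → H, ∑ m : Fin T → M,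
        Jpre P' Q n.val h m * Q.q n h m (m n) * ψ h m
      = ∑ h : Fin T → H, ∑ m : Fin T → M,
          Jpre P' Q n.val h m * ∑ b : M, Q.q n h m b * ψ h (Function.update m n b) := by
  rw [Finset.mul_sum]
  refine Finset.sum_congr rfl (fun h _ => ?_)
  have := sumcoord (X := M) n
    (fun m b => Jpre P' Q n.val h m * Q.q n h m b * ψ h (Function.update m n b))
  simp only [Function.update_eq_self] at this
  calc (Fintype.card M : ℝ) * ∑ m : Fin T → M,
        Jpre P' Q n.val h m * Q.q n h m (m n) * ψ h m = _ := this
    _ = ∑ m : Fin T → M, ∑ b : M,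
          Jpre P' Q n.val h m * Q.q n h m b * ψ h (Function.update m n b) := by
        refine Finset.sum_congr rfl (fun m _ => Finset.sum_congr rfl (fun b _ => ?_))
        have hup : ∀ s : Fin T, s < n → Function.update m n b s = m s :=
          fun s hs => Function.update_of_ne (Fin.ne_of_lt hs) _ _
        rw [Jpre_update_m P' Q n.val n (le_refl _),
            Q.causal n h h (Function.update m n b) m (fun s _ => rfl) hup,
            Function.update_idem]
    _ = ∑ m : Fin T → M,
          Jpre P' Q n.val h m * ∑ b : M, Q.q n h m b * ψ h (Function.update m n b) := by
        refine Finset.sum_congr rfl (fun m _ => ?_)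
        rw [Finset.mul_sum]
        exact Finset.sum_congr rfl (fun b _ => by ring)

lemma CE : ∀ (k : ℕ), k ≤ T → ∀ ψ : (Fin T → H) → (Fin T → M) → ℝ, MeasLE (T - k) ψ →
    ∑ h : Fin T → H, ∑ m : Fin T → M, Jpre P' Q (T - k) h m * ψ h m
      = ((Fintype.card H : ℝ) * (Fintype.card M : ℝ))^k * expVal P' Q ψ := by
  intro k
  induction k with
  | zero =>
    intro _ ψ _
    simp only [Nat.sub_zero, pow_zero, one_mul, expVal]
    exact Finset.sum_congr rfl (fun h _ => Finset.sum_congr rfl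
      (fun m _ => by rw [Jpre_T]))
  | succ k ih =>
    intro hk ψ hψ
    have hnT : T - (k+1) < T := by omega
    set nF : Fin T := ⟨T - (k+1), hnT⟩ with hnF
    have hval : nF.val = T - (k+1) := rfl
    have hsucc : nF.val + 1 = T - k := by simp [hval]; omega
    have hupd_h : ∀ h m a, ψ (Function.update h nF a) m = ψ h m := by
      intro h m a
      exact hψ _ _ _ _
        (fun s hs => Function.update_of_ne (fun hc => by subst hc; simp [hval] at hs) _ _)
        (fun s _ => rfl)
    have e1 : ∑ h : Fin T → H, ∑ m : Fin T → M, Jpre P' Q (T - (k+1)) h m * ψ h m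
        = (Fintype.card M : ℝ) * ∑ h : Fin T → H, ∑ m : Fin T → M,
            Jpre P' Q nF.val h m * Q.q nF h m (m nF) * ψ h m := by
      rw [step_m]
      refine Finset.sum_congr rfl (fun h _ => Finset.sum_congr rfl (fun m _ => ?_))
      have : ∀ b, ψ h (Function.update m nF b) = ψ h m := by
        intro b
        exact hψ _ _ _ _ (fun s _ => rfl)
          (fun s hs => Function.update_of_ne (fun hc => by subst hc; simp [hval] at hs) _ _)
      simp only [this, ← Finset.sum_mul, Q.sum_one, one_mul, hval]
    have e2 := step_h P' Q nF ψ hupd_h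
    rw [e1, ← e2, hsucc, ih (by omega) ψ (hψ.mono (by omega))]
    ring

lemma CE' (n : ℕ) (hn : n ≤ T) (ψ : (Fin T → H) → (Fin T → M) → ℝ) (hψ : MeasLE n ψ) :
    ∑ h : Fin T → H, ∑ m : Fin T → M, Jpre P' Q n h m * ψ h m
      = ((Fintype.card H : ℝ) * (Fintype.card M : ℝ))^(T - n) * expVal P' Q ψ := by
  have h0 : T - (T - n) = n := by omega
  have := CE P' Q (T - n) (by omega) ψ (by rwa [h0])
  rwa [h0] at this

variable [Nonempty H] [Nonempty M]

lemma expVal_const (c : ℝ) : expVal P' Q (fun _ _ => c) = c := by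
  have hmeas : MeasLE (T := T) (H := H) (M := M) 0 (fun _ _ => c) :=
    fun _ _ _ _ _ _ => rfl
  have := CE' P' Q 0 (Nat.zero_le _) _ hmeas
  simp only [Jpre_zero, one_mul, Nat.sub_zero] at this
  have hcard : (∑ _h : Fin T → H, ∑ _m : Fin T → M, c)
      = ((Fintype.card H : ℝ) * (Fintype.card M : ℝ))^T * c := by
    simp [Finset.sum_const, Fintype.card_fun, mul_pow]
    ring
  rw [hcard] at this
  have hpos : ((Fintype.card H : ℝ) * (Fintype.card M : ℝ))^T ≠ 0 := by
    positivity
  exact (mul_left_cancel₀ hpos this).symm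

set_option linter.unusedSectionVars false in
lemma expVal_congr {ψ χ : (Fin T → H) → (Fin T → M) → ℝ}
    (hc : ∀ h m, ψ h m = χ h m) : expVal P' Q ψ = expVal P' Q χ := by
  unfold expVal
  exact Finset.sum_congr rfl (fun h _ => Finset.sum_congr rfl (fun m _ => by rw [hc]))

set_option linter.unusedSectionVars false in
lemma expVal_add (ψ χ : (Fin T → H) → (Fin T → M) → ℝ) :
    expVal P' Q (fun h m => ψ h m + χ h m) = expVal P' Q ψ + expVal P' Q χ := by
  simp [expVal, mul_add, Finset.sum_add_distrib]

set_option linter.unusedSectionVars false in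
lemma expVal_sub (ψ χ : (Fin T → H) → (Fin T → M) → ℝ) :
    expVal P' Q (fun h m => ψ h m - χ h m) = expVal P' Q ψ - expVal P' Q χ := by
  simp [expVal, mul_sub, Finset.sum_sub_distrib]

set_option linter.unusedSectionVars false in
lemma expVal_smul (c : ℝ) (ψ : (Fin T → H) → (Fin T → M) → ℝ) :
    expVal P' Q (fun h m => c * ψ h m) = c * expVal P' Q ψ := by
  simp [expVal, Finset.mul_sum]
  refine Finset.sum_congr rfl (fun h _ => Finset.sum_congr rfl (fun m _ => by ring))

set_option linter.unusedSectionVars false in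
lemma expVal_finsum {ι : Type*} (s : Finset ι) (f : ι → (Fin T → H) → (Fin T → M) → ℝ) :
    expVal P' Q (fun h m => ∑ i ∈ s, f i h m) = ∑ i ∈ s, expVal P' Q (f i) := by
  classical
  induction s using Finset.induction with
  | empty => simp [expVal]
  | insert a s hnotmem ih =>
    rw [Finset.sum_insert hnotmem, ← ih, ← expVal_add]
    exact expVal_congr P' Q (fun h m => by rw [Finset.sum_insert hnotmem])

lemma cond_insert (n : Fin T) (ψ : (Fin T → H) → (Fin T → M) → ℝ)
    (hψh : ∀ h m a, ψ (Function.update h n a) m = ψ h m)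
    (hmeas : MeasLE (n.val + 1) ψ) :
    expVal P' Q ψ
      = expVal P' Q (fun h m => ∑ b, Q.q n h m b * ψ h (Function.update m n b)) := by
  set ψ' : (Fin T → H) → (Fin T → M) → ℝ :=
    fun h m => ∑ b, Q.q n h m b * ψ h (Function.update m n b) with hψ'def
  have hmeas' : MeasLE n.val ψ' := by
    intro h h' m m' ah am
    refine Finset.sum_congr rfl (fun b _ => ?_)
    have hq : Q.q n h m b = Q.q n h' m' b :=
      congrFun (Q.causal n h h' m m' (fun s hs => ah s hs) (fun s hs => am s hs)) b
    have hpsi : ψ h (Function.update m n b) = ψ h' (Function.update m' n b) := by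
      rw [← hψh h (Function.update m n b) (h' n)]
      refine hmeas _ _ _ _ ?_ ?_
      · intro s hs
        by_cases hsn : s = n
        · subst hsn; simp
        · have hlt : s.val < n.val := by
            have : s.val ≠ n.val := fun hc => hsn (Fin.ext hc)
            omega
          rw [Function.update_of_ne hsn, ah s hlt]
      · intro s hs
        by_cases hsn : s = n
        · subst hsn; simp
        · have hlt : s.val < n.val := by
            have : s.val ≠ n.val := fun hc => hsn (Fin.ext hc)
            omega
          rw [Function.update_of_ne hsn, Function.update_of_ne hsn, am s hlt]
    rw [hq, hpsi]
  have e1 : ∑ h : Fin T → H, ∑ m : Fin T → M, Jpre P' Q n.val h m * ψ' h m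
      = ((Fintype.card H : ℝ) * (Fintype.card M : ℝ))^(T - n.val) * expVal P' Q ψ' :=
    CE' P' Q n.val n.isLt.le ψ' hmeas'
  have e2 := step_m P' Q n ψ
  have e3 := step_h P' Q n ψ hψh
  have e4 : ∑ h : Fin T → H, ∑ m : Fin T → M, Jpre P' Q (n.val + 1) h m * ψ h m
      = ((Fintype.card H : ℝ) * (Fintype.card M : ℝ))^(T - (n.val + 1)) * expVal P' Q ψ :=
    CE' P' Q (n.val + 1) n.isLt ψ hmeas
  have hpow : T - n.val = (T - (n.val + 1)) + 1 := by
    have := n.isLt; omega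
  have combo : ((Fintype.card H : ℝ) * (Fintype.card M : ℝ))^(T - n.val) * expVal P' Q ψ'
      = ((Fintype.card H : ℝ) * (Fintype.card M : ℝ))^(T - n.val) * expVal P' Q ψ := by
    rw [← e1, ← e2, ← e3, e4, hpow, pow_succ]
    ring
  have hpos : ((Fintype.card H : ℝ) * (Fintype.card M : ℝ))^(T - n.val) ≠ 0 := by
    positivity
  exact (mul_left_cancel₀ hpos combo).symm

-- Z lemmas
variable (φ : (Fin T → H) → (Fin T → M) → ℝ)

lemma Zaux_pos (k : ℕ) (h : Fin T → H) (m : Fin T → M) : 0 < Zaux Q φ k h m := by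
  cases k <;> simp [Zaux] <;> exact Real.exp_pos _

lemma Zcond_pos (t : Fin T) (h : Fin T → H) (m : Fin T → M) : 0 < Zcond Q φ t h m :=
  Zaux_pos Q φ _ h m

lemma Zmarg_pos (t : Fin T) (h : Fin T → H) (m : Fin T → M) : 0 < Zmarg Q φ t h m :=
  Finset.sum_pos (fun a _ => Zcond_pos Q φ t _ m) Finset.univ_nonempty

lemma Zaux_causal : ∀ (k : ℕ), k < T → ∀ (h h' : Fin T → H) (m m' : Fin T → M),
    (∀ s : Fin T, s.val ≤ T - 1 - k → h s = h' s) →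
    (∀ s : Fin T, s.val ≤ T - 1 - k → m s = m' s) →
    Zaux Q φ k h m = Zaux Q φ k h' m' := by
  intro k
  induction k with
  | zero =>
    intro _ h h' m m' ah am
    have hh : h = h' := funext (fun s => ah s (by have := s.isLt; omega))
    have hm : m = m' := funext (fun s => am s (by have := s.isLt; omega))
    rw [hh, hm]
  | succ k ih =>
    intro hk h h' m m' ah am
    have hk' : T - 1 - k = (T - 1 - (k+1)) + 1 := by omega
    simp only [Zaux]
    congr 1
    refine Finset.sum_congr rfl (fun b _ => ?_)
    have hq : Q.q ⟨T - 1 - k, idx_lt T k⟩ h m = Q.q ⟨T - 1 - k, idx_lt T k⟩ h' m' :=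
      Q.causal _ _ _ _ _
        (fun s hs => ah s (by have := Fin.lt_def.mp hs; simp at this ⊢; omega))
        (fun s hs => am s (by have := Fin.lt_def.mp hs; simp at this ⊢; omega))
    rw [hq]
    congr 2
    refine Finset.sum_congr rfl (fun a _ => ?_)
    refine ih (by omega) _ _ _ _ ?_ ?_
    · intro s hs
      by_cases hsn : s = (⟨T - 1 - k, idx_lt T k⟩ : Fin T)
      · subst hsn; simp
      · have : s.val ≠ T - 1 - k := fun hc => hsn (Fin.ext hc)
        rw [Function.update_of_ne hsn, Function.update_of_ne hsn]
        exact ah s (by omega)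
    · intro s hs
      by_cases hsn : s = (⟨T - 1 - k, idx_lt T k⟩ : Fin T)
      · subst hsn; simp
      · have : s.val ≠ T - 1 - k := fun hc => hsn (Fin.ext hc)
        rw [Function.update_of_ne hsn, Function.update_of_ne hsn]
        exact am s (by omega)

lemma Zcond_causal (t : Fin T) (h h' : Fin T → H) (m m' : Fin T → M)
    (ah : ∀ s : Fin T, s.val ≤ t.val → h s = h' s)
    (am : ∀ s : Fin T, s.val ≤ t.val → m s = m' s) :
    Zcond Q φ t h m = Zcond Q φ t h' m' := by
  have h1 : T - 1 - (T - 1 - t.val) = t.val := by have := t.isLt; omega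
  exact Zaux_causal Q φ (T - 1 - t.val) (by have := t.isLt; omega) h h' m m'
    (fun s hs => ah s (by omega)) (fun s hs => am s (by omega))

lemma Zmarg_causal (t : Fin T) (h h' : Fin T → H) (m m' : Fin T → M)
    (ah : ∀ s : Fin T, s.val < t.val → h s = h' s)
    (am : ∀ s : Fin T, s.val ≤ t.val → m s = m' s) :
    Zmarg Q φ t h m = Zmarg Q φ t h' m' := by
  refine Finset.sum_congr rfl (fun a _ => ?_)
  refine Zcond_causal Q φ t _ _ _ _ ?_ am
  intro s hs
  by_cases hsn : s = t
  · subst hsn; simp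
  · have : s.val ≠ t.val := fun hc => hsn (Fin.ext hc)
    rw [Function.update_of_ne hsn, Function.update_of_ne hsn]
    exact ah s (by omega)

lemma Zcond_last (h : Fin T → H) (m : Fin T → M) :
    Zcond Q φ ⟨T - 1, by have := Nat.pos_of_ne_zero (NeZero.ne T); omega⟩ h m
      = Real.exp (φ h m) := by
  unfold Zcond
  simp only [show T - 1 - (T - 1) = 0 from by omega]
  rfl

lemma Zcond_rec (t : Fin T) (ht : t.val + 1 < T) (h : Fin T → H) (m : Fin T → M) :
    Real.log (Zcond Q φ t h m)
      = ∑ b : M, Q.q ⟨t.val + 1, ht⟩ h m b *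
          Real.log (Zmarg Q φ ⟨t.val + 1, ht⟩ h (Function.update m ⟨t.val + 1, ht⟩ b)) := by
  have hk : T - 1 - t.val = (T - 1 - (t.val + 1)) + 1 := by omega
  have hik : T - 1 - (T - 1 - (t.val + 1)) = t.val + 1 := by omega
  have hfin : (⟨T - 1 - (T - 1 - (t.val + 1)), idx_lt T (T - 1 - (t.val + 1))⟩ : Fin T)
      = ⟨t.val + 1, ht⟩ := Fin.ext hik
  unfold Zcond
  rw [hk]
  simp only [Zaux, hfin, Real.log_exp]
  rfl

-- main proof pieces
section Main
variable (Plam P'x : HumanModel T H M)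

lemma neg_log_cc (hG : IsGibbs Q φ Plam) (h : Fin T → H) (m : Fin T → M) :
    - Real.log (Plam.cc h m)
      = ∑ t : Fin T, (Real.log (Zmarg Q φ t h m) - Real.log (Zcond Q φ t h m)) := by
  have hp : ∀ t : Fin T, Plam.p t h m (h t) = Zcond Q φ t h m / Zmarg Q φ t h m := by
    intro t
    rw [hG t h m (h t), Function.update_eq_self]
  unfold HumanModel.cc
  rw [Real.log_prod (fun t _ => by
    rw [hp t]
    exact ne_of_gt (div_pos (Zcond_pos Q φ t h m) (Zmarg_pos Q φ t h m)))]
  rw [← Finset.sum_neg_distrib]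
  refine Finset.sum_congr rfl (fun t _ => ?_)
  rw [hp t, Real.log_div (ne_of_gt (Zcond_pos Q φ t h m)) (ne_of_gt (Zmarg_pos Q φ t h m))]
  ring

lemma exp_log_Zmarg_zero :
    expVal P' Q (fun h m => Real.log (Zmarg Q φ 0 h m)) = dualPartition Q φ := by
  have h0v : ((0 : Fin T)).val = 0 := rfl
  have hψh : ∀ (h : Fin T → H) (m : Fin T → M) (a : H),
      Real.log (Zmarg Q φ 0 (Function.update h 0 a) m) = Real.log (Zmarg Q φ 0 h m) :=
    fun h m a => congrArg Real.log
      (Zmarg_causal Q φ 0 _ _ _ _ (fun s hs => by rw [h0v] at hs; omega) (fun s _ => rfl))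
  have hmeas : MeasLE ((0 : Fin T).val + 1) (fun h m => Real.log (Zmarg Q φ 0 h m)) := by
    intro h h' m m' ah am
    exact congrArg Real.log (Zmarg_causal Q φ 0 _ _ _ _
      (fun s hs => by rw [h0v] at hs; omega) (fun s hs => am s (by rw [h0v] at hs; omega)))
  rw [cond_insert P' Q 0 _ hψh hmeas]
  have hconst : ∀ (h : Fin T → H) (m : Fin T → M),
      (∑ b : M, Q.q 0 h m b * Real.log (Zmarg Q φ 0 h (Function.update m 0 b)))
        = dualPartition Q φ := by
    intro h m
    unfold dualPartition
    refine Finset.sum_congr rfl (fun b _ => ?_)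
    have hq : Q.q 0 h m = Q.q 0 (Classical.arbitrary _) (Classical.arbitrary _) :=
      Q.causal 0 _ _ _ _ (fun s hs => absurd hs (by simp [Fin.lt_def]))
        (fun s hs => absurd hs (by simp [Fin.lt_def]))
    have hz : Zmarg Q φ 0 h (Function.update m 0 b)
        = Zmarg Q φ 0 (Classical.arbitrary _)
            (Function.update (Classical.arbitrary (Fin T → M)) 0 b) := by
      refine Zmarg_causal Q φ 0 _ _ _ _ (fun s hs => by rw [h0v] at hs; omega) (fun s hs => ?_)
      have hs0 : s = 0 := Fin.ext (by rw [h0v] at hs ⊢; omega)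
      subst hs0; simp
    rw [hq, hz]
  rw [expVal_congr P' Q hconst, expVal_const]

lemma exp_log_Zcond (t : Fin T) (ht : t.val + 1 < T) :
    expVal P' Q (fun h m => Real.log (Zcond Q φ t h m))
      = expVal P' Q (fun h m => Real.log (Zmarg Q φ ⟨t.val + 1, ht⟩ h m)) := by
  set n : Fin T := ⟨t.val + 1, ht⟩ with hn
  have hψh : ∀ (h : Fin T → H) (m : Fin T → M) (a : H),
      Real.log (Zmarg Q φ n (Function.update h n a) m) = Real.log (Zmarg Q φ n h m) := by
    intro h m a
    refine congrArg Real.log (Zmarg_causal Q φ n _ _ _ _ (fun s hs => ?_) (fun s _ => rfl))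
    exact Function.update_of_ne (fun hc => by subst hc; omega) _ _
  have hmeas : MeasLE (n.val + 1) (fun h m => Real.log (Zmarg Q φ n h m)) := by
    intro h h' m m' ah am
    exact congrArg Real.log (Zmarg_causal Q φ n _ _ _ _
      (fun s hs => ah s (by omega)) (fun s hs => am s (by omega)))
  rw [expVal_congr P' Q (fun h m => Zcond_rec Q φ t ht h m),
    ← cond_insert P' Q n _ hψh hmeas]

set_option maxHeartbeats 800000 in
theorem main_thm {F G : Type*} [Fintype F] [Fintype G]
    (f : F → (Fin T → H) → (Fin T → M) → ℝ) (g : G → (Fin T → H) → (Fin T → M) → ℝ)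
    (lf : F → ℝ) (lg : G → ℝ)
    (hGibbs : IsGibbs Q (fun h m => (∑ i, lf i * f i h m) + (∑ j, lg j * g j h m)) Plam) :
    expVal P' Q (fun h m => - Real.log (Plam.cc h m)) =
      dualPartition Q (fun h m => (∑ i, lf i * f i h m) + (∑ j, lg j * g j h m)) -
        (∑ i, lf i * expVal P' Q (f i)) - (∑ j, lg j * expVal P' Q (g j)) := by
  set φ : (Fin T → H) → (Fin T → M) → ℝ :=
    fun h m => (∑ i, lf i * f i h m) + (∑ j, lg j * g j h m) with hφ
  set u : ℕ → ℝ := fun n =>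
    if hn : n < T then expVal P' Q (fun h m => Real.log (Zmarg Q φ ⟨n, hn⟩ h m))
    else expVal P' Q φ with hu
  have hTpos : 0 < T := Nat.pos_of_ne_zero (NeZero.ne T)
  have c1 : ∀ t : Fin T,
      expVal P' Q (fun h m => Real.log (Zmarg Q φ t h m)) = u t.val := by
    intro t
    simp [hu, t.isLt]
  have c2 : ∀ t : Fin T,
      expVal P' Q (fun h m => Real.log (Zcond Q φ t h m)) = u (t.val + 1) := by
    intro t
    by_cases ht : t.val + 1 < T
    · rw [exp_log_Zcond P' Q φ t ht]
      simp [hu, ht]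
    · have htv : t = ⟨T - 1, by omega⟩ := Fin.ext (by show t.val = T - 1; have := t.isLt; omega)
      have : expVal P' Q (fun h m => Real.log (Zcond Q φ t h m)) = expVal P' Q φ := by
        refine expVal_congr P' Q (fun h m => ?_)
        rw [htv, Zcond_last, Real.log_exp]
      rw [this]
      simp [hu, ht]
  have step1 : expVal P' Q (fun h m => - Real.log (Plam.cc h m))
      = ∑ t : Fin T, (u t.val - u (t.val + 1)) := by
    rw [expVal_congr P' Q (neg_log_cc Q φ Plam hGibbs),
      expVal_finsum P' Q Finset.univ
        (fun t h m => Real.log (Zmarg Q φ t h m) - Real.log (Zcond Q φ t h m))]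
    exact Finset.sum_congr rfl (fun t _ => by rw [expVal_sub, c1, c2])
  have tele : ∑ t : Fin T, (u t.val - u (t.val + 1)) = u 0 - u T := by
    rw [Fin.sum_univ_eq_sum_range (fun n => u n - u (n + 1)) T]
    exact Finset.sum_range_sub' u T
  have u0 : u 0 = dualPartition Q φ := by
    have h0 : (⟨0, hTpos⟩ : Fin T) = 0 := Fin.ext rfl
    simp only [hu, dif_pos hTpos, h0]
    exact exp_log_Zmarg_zero P' Q φ
  have uT : u T = (∑ i, lf i * expVal P' Q (f i)) + (∑ j, lg j * expVal P' Q (g j)) := by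
    simp only [hu, dif_neg (lt_irrefl T), hφ]
    rw [expVal_add, expVal_finsum, expVal_finsum]
    congr 1 <;> exact Finset.sum_congr rfl (fun i _ => expVal_smul P' Q _ _)
  rw [step1, tele, u0, uT]
  ring
end Main
end AuxProof

/-- telescoping partition-function identity, Lemma 2 of Ziebart et al.:
for every machine policy `Q`, every `λ = (λ_f, λ_g)`, and every human model `P′`, the causal
cross-entropy of the causal Gibbs model `P_λ` satisfies
`E_{P′Q}[−log P_λ(H^T‖M^T)] = Σ_{m_1} Q(m_1)·log Z_λ(m_1) − λ_f·E_{P′Q}[f] − λ_g·E_{P′Q}[g]`. -/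
theorem gibbs_cross_entropy_telescopes [Nonempty H] [Nonempty M]
    {F G : Type*} [Fintype F] [Fintype G]
    (Q : MachinePolicy T H M)
    (f : F → (Fin T → H) → (Fin T → M) → ℝ) (g : G → (Fin T → H) → (Fin T → M) → ℝ)
    (lf : F → ℝ) (lg : G → ℝ)
    (Plam : HumanModel T H M)
    (hGibbs : IsGibbs Q (fun h m => (∑ i, lf i * f i h m) + (∑ j, lg j * g j h m)) Plam)
    (P' : HumanModel T H M) :
    expVal P' Q (fun h m => - Real.log (Plam.cc h m)) =
      dualPartition Q (fun h m => (∑ i, lf i * f i h m) + (∑ j, lg j * g j h m)) -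
        (∑ i, lf i * expVal P' Q (f i)) - (∑ j, lg j * expVal P' Q (g j)) := by
  exact main_thm P' Q Plam f g lf lg hGibbs
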